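/- arXiv:1707.06677 — 4 statements merged into one kernel-verified Lean document; each statement's English description precedes it below -/
import Mathlib

section
/- Let g(z) = ∑_{n=1}^∞ c_n z^{-n} ∈ ℚ((z^{-1})) be a Laurent series all of whose continued fraction partial quotients are linear (equivalently, the denominator q_k(z) of the k-th convergent has degree exactly k). Then the k-th convergent p_k/q_k can be represented with integer polynomial numerator and denominator satisfying h(q_k) ≤ (‖c_{≤2k+1}‖_∞² · k)^{k/2} and h(p_k) ≤ ‖c_{≤2k+1}‖_∞^{k+1} · k^{(k+2)/2}, where h denotes the maximum absolute value of coefficients and ‖c_{≤m}‖_∞ = max_{1≤i≤m} |c_i|. -/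
open Matrix Finset

lemma amgm_prod_le_one {n : ℕ} (hn : 0 < n) (f : Fin n → ℝ)
    (hf : ∀ i, 0 ≤ f i) (hsum : ∑ i, f i = n) : ∏ i, f i ≤ 1 := by
  have hn' : (0:ℝ) < n := by exact_mod_cast hn
  have h := Real.geom_mean_le_arith_mean_weighted Finset.univ (fun _ => (n:ℝ)⁻¹) f
    (fun i _ => by positivity) (by simp [Finset.card_univ]; field_simp)
    (fun i _ => hf i)
  have h2 : ∑ i, (n:ℝ)⁻¹ * f i = 1 := by
    rw [← Finset.mul_sum, hsum]; field_simp
  rw [h2] at h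
  have h3 : (∏ i, f i ^ ((n:ℝ)⁻¹)) ^ (n:ℕ) = ∏ i, f i := by
    rw [← Finset.prod_pow]
    refine Finset.prod_congr rfl fun i _ => ?_
    rw [← Real.rpow_natCast (f i ^ ((n:ℝ)⁻¹)) n, ← Real.rpow_mul (hf i),
      inv_mul_cancel₀ (ne_of_gt hn'), Real.rpow_one]
  calc ∏ i, f i = (∏ i, f i ^ ((n:ℝ)⁻¹)) ^ (n:ℕ) := h3.symm
    _ ≤ 1 ^ (n:ℕ) := pow_le_pow_left₀ (Finset.prod_nonneg fun i _ => Real.rpow_nonneg (hf i) _) h n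
    _ = 1 := one_pow n

lemma hadamard_sq {n : ℕ} (A : Matrix (Fin n) (Fin n) ℝ) :
    A.det ^ 2 ≤ ∏ i, ∑ j, A i j ^ 2 := by
  rcases Nat.eq_zero_or_pos n with h0 | hn
  · subst h0; simp [Matrix.det_fin_zero]
  by_cases hR : ∀ i, 0 < ∑ j, A i j ^ 2
  · set R : Fin n → ℝ := fun i => ∑ j, A i j ^ 2 with hRdef
    set d : Fin n → ℝ := fun i => (Real.sqrt (R i))⁻¹ with hddef
    have hd2 : ∀ i, d i ^ 2 * R i = 1 := by
      intro i
      have : Real.sqrt (R i) ^ 2 = R i := Real.sq_sqrt (le_of_lt (hR i))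
      rw [hddef]; simp only [inv_pow, this]
      exact inv_mul_cancel₀ (ne_of_gt (hR i))
    set A' : Matrix (Fin n) (Fin n) ℝ := Matrix.of fun i j => d i * A i j with hA'def
    have hA'eq : A' = Matrix.diagonal d * A := by
      ext i j; simp [hA'def, Matrix.diagonal_mul]
    have hdetA' : A'.det = (∏ i, d i) * A.det := by
      rw [hA'eq, Matrix.det_mul, Matrix.det_diagonal]
    set B := A' * A'ᴴ with hBdef
    have hB : B.PosSemidef := Matrix.posSemidef_self_mul_conjTranspose A'
    have hherm := hB.1
    have hBdiag : ∀ i, B i i = 1 := by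
      intro i
      have h1 : B i i = ∑ j, (d i * A i j) ^ 2 := by
        simp [hBdef, Matrix.mul_apply, hA'def, sq]
      have h2 : ∑ j, (d i * A i j) ^ 2 = d i ^ 2 * R i := by
        simp [mul_pow, ← Finset.mul_sum, hRdef]
      rw [h1, h2]; exact hd2 i
    have htr : ∑ i, hherm.eigenvalues i = n := by
      have h1 : B.trace = ∑ i, ((hherm.eigenvalues i : ℝ)) := by
        nth_rewrite 1 [hherm.spectral_theorem]
        rw [Unitary.conjStarAlgAut_apply]
        rw [Matrix.trace_mul_cycle]
        rw [(Matrix.mem_unitaryGroup_iff').mp (hherm.eigenvectorUnitary).2]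
        simp [Matrix.trace_diagonal]
      have h2 : B.trace = (n:ℝ) := by
        simp [Matrix.trace, Matrix.diag, hBdiag]
      rw [h2] at h1; exact h1.symm
    have hdet : B.det = ∏ i, hherm.eigenvalues i := by
      have := hherm.det_eq_prod_eigenvalues
      simpa using this
    have hle1 : B.det ≤ 1 := by
      rw [hdet]
      exact amgm_prod_le_one hn _ (fun i => hB.eigenvalues_nonneg i) htr
    have hBdet : B.det = (∏ i, d i ^ 2) * A.det ^ 2 := by
      rw [hBdef, Matrix.det_mul, Matrix.det_conjTranspose, hdetA']
      simp only [star_trivial, Finset.prod_pow]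
      ring
    have key : (∏ i, d i ^ 2) * A.det ^ 2 ≤ 1 := hBdet ▸ hle1
    have hprodpos : 0 < ∏ i, R i := Finset.prod_pos fun i _ => hR i
    have hdR : (∏ i, d i ^ 2) * ∏ i, R i = 1 := by
      rw [← Finset.prod_mul_distrib]
      exact Finset.prod_eq_one fun i _ => hd2 i
    calc A.det ^ 2 = ((∏ i, d i ^ 2) * A.det ^ 2) * ∏ i, R i := by
          rw [mul_comm (∏ i, d i ^ 2), mul_assoc, hdR, mul_one]
      _ ≤ 1 * ∏ i, R i := by
          exact mul_le_mul_of_nonneg_right key (le_of_lt hprodpos)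
      _ = ∏ i, R i := one_mul _
  · push_neg at hR
    obtain ⟨i, hi⟩ := hR
    have hsum0 : ∑ j, A i j ^ 2 = 0 :=
      le_antisymm hi (Finset.sum_nonneg fun j _ => sq_nonneg _)
    have hrow : ∀ j, A i j = 0 := by
      intro j
      have := (Finset.sum_eq_zero_iff_of_nonneg (fun j _ => sq_nonneg (A i j))).mp hsum0 j
        (Finset.mem_univ j)
      exact pow_eq_zero_iff (n := 2) (by norm_num) |>.mp this
    rw [Matrix.det_eq_zero_of_row_eq_zero i hrow]
    simp only [ne_eq, OfNat.ofNat_ne_zero, not_false_eq_true, zero_pow]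
    exact Finset.prod_nonneg fun j _ => Finset.sum_nonneg fun j' _ => sq_nonneg _

lemma int_det_cast {n : ℕ} {R : Type*} [CommRing R] (A : Matrix (Fin n) (Fin n) ℤ) :
    ((A.det : ℤ) : R) = (A.map (Int.cast : ℤ → R)).det := by
  simpa using RingHom.map_det (Int.castRingHom R) A


/-- Let `g(z) = ∑_{n≥1} c_n z^{-n}` (integer coefficients) be a Laurent series all of whose
continued-fraction partial quotients are linear; equivalently (as used in the paper) all
Hankel matrices `H_j = (c_{i+i'+1})_{0≤i,i'<j}` are invertible, so the denominator of the
`k`-th convergent has degree exactly `k`.  Then the `k`-th convergent `p_k/q_k` can be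
represented with integer polynomials (`q` of degree `k`; being the `k`-th convergent is
expressed by the vanishing of the coefficients of `z^{-1},…,z^{-k}` in `q·g - p`, with `p`
the polynomial part of `q·g`) whose heights satisfy
`h(q_k) ≤ (‖c_{≤2k+1}‖_∞² k)^{k/2}` and `h(p_k) ≤ ‖c_{≤2k+1}‖_∞^{k+1} k^{(k+2)/2}`,
for any bound `M ≥ max_{1≤i≤2k+1} |c_i|`. -/
theorem integer_convergent_height_bounds
    (k : ℕ) (hk : 1 ≤ k) (c : ℕ → ℤ)
    (hH : ∀ j : ℕ, (Matrix.of fun i i' : Fin j => (c (i.1 + i'.1 + 1) : ℚ)).det ≠ 0)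
    (M : ℝ) (hM : ∀ i : ℕ, 1 ≤ i → i ≤ 2 * k + 1 → (|c i| : ℝ) ≤ M) :
    ∃ p q : Polynomial ℤ,
      q.degree = k ∧
      (∀ i : ℕ, 1 ≤ i → i ≤ k →
        ∑ j ∈ Finset.range (k + 1), q.coeff j * c (i + j) = 0) ∧
      (∀ i : ℕ, p.coeff i = ∑ j ∈ Finset.Icc (i + 1) k, q.coeff j * c (j - i)) ∧
      (∀ j : ℕ, (|q.coeff j| : ℝ) ≤ (M ^ 2 * k) ^ ((k : ℝ) / 2)) ∧
      (∀ j : ℕ, (|p.coeff j| : ℝ) ≤ M ^ (k + 1) * (k : ℝ) ^ (((k : ℝ) + 2) / 2)) := by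
  classical
  have hM0 : (0:ℝ) ≤ M := le_trans (abs_nonneg _) (hM 1 le_rfl (by omega))
  have hk0 : (0:ℝ) < (k:ℝ) := by exact_mod_cast hk
  set D : Matrix (Fin k) (Fin (k+1)) ℤ := Matrix.of fun i j => c (i.1 + 1 + j.1) with hD
  set Q : Fin (k+1) → ℤ := fun j => (-1)^(j:ℕ) * ((D.submatrix id j.succAbove).det) with hQ
  -- Laplace expansion identity
  have expand : ∀ r : Fin (k+1) → ℤ,
      ∑ j, r j * Q j
        = (Matrix.of (Fin.cons r (fun i => D i)) : Matrix (Fin (k+1)) (Fin (k+1)) ℤ).det := by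
    intro r
    rw [Matrix.det_succ_row_zero]
    refine Finset.sum_congr rfl fun j _ => ?_
    have h0 : (Matrix.of (Fin.cons r (fun i => D i)) : Matrix (Fin (k+1)) (Fin (k+1)) ℤ) 0 j
        = r j := by simp
    have hsub : (Matrix.of (Fin.cons r (fun i => D i)) :
          Matrix (Fin (k+1)) (Fin (k+1)) ℤ).submatrix Fin.succ j.succAbove
        = D.submatrix id j.succAbove := by
      ext i i'
      simp [Matrix.submatrix_apply]
    rw [h0, hsub, hQ]
    ring
  -- orthogonality
  have orth : ∀ i : ℕ, 1 ≤ i → i ≤ k → ∑ j : Fin (k+1), c (i + j.1) * Q j = 0 := by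
    intro i h1 h2
    rw [expand]
    refine Matrix.det_zero_of_row_eq (i := (0 : Fin (k+1))) (j := ⟨i, by omega⟩) ?_ ?_
    · intro h
      have : (0:ℕ) = i := congrArg Fin.val h
      omega
    · have hsucc : (⟨i, by omega⟩ : Fin (k+1)) = Fin.succ ⟨i - 1, by omega⟩ := by
        apply Fin.ext; simp; omega
      funext j
      rw [hsucc]
      simp only [Matrix.of_apply, Fin.cons_zero, Fin.cons_succ, hD]
      have harg : i + j.1 = i - 1 + 1 + j.1 := by omega
      rw [harg]
  -- leading minor is nonzero
  have hQlast : Q (Fin.last k) ≠ 0 := by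
    have hd : (D.submatrix id (Fin.last k).succAbove).det ≠ 0 := by
      intro h0
      apply hH k
      have heq : (Matrix.of fun i i' : Fin k => (c (i.1 + i'.1 + 1) : ℚ))
          = (D.submatrix id (Fin.last k).succAbove).map (Int.cast : ℤ → ℚ) := by
        ext i i'
        simp only [hD, Fin.succAbove_last, Matrix.submatrix_apply, Matrix.map_apply,
          Matrix.of_apply, id_eq, Fin.coe_castSucc]
        have harg : i.1 + i'.1 + 1 = i.1 + 1 + i'.1 := by omega
        rw [harg]
      rw [heq, ← int_det_cast, h0]
      simp
    rw [hQ]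
    simp only [ne_eq, mul_eq_zero, not_or]
    constructor
    · exact pow_ne_zero _ (by norm_num)
    · exact hd
  -- the polynomial q
  set Qf : ℕ → ℤ := fun j => if h : j < k+1 then Q ⟨j, h⟩ else 0 with hQf
  set q : Polynomial ℤ := ∑ j ∈ Finset.range (k+1), Polynomial.C (Qf j) * Polynomial.X ^ j with hq
  have hqc : ∀ j, q.coeff j = Qf j := by
    intro j
    rw [hq, Polynomial.finset_sum_coeff]
    simp only [Polynomial.coeff_C_mul_X_pow]
    by_cases hj : j < k + 1
    · rw [Finset.sum_eq_single j]
      · simp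
      · intro b _ hbj; simp [Ne.symm hbj]
      · intro h; exact absurd (Finset.mem_range.mpr hj) h
    · rw [Finset.sum_eq_zero, hQf]
      · simp only [dif_neg hj]
      · intro b hb
        rw [Finset.mem_range] at hb
        have : j ≠ b := by omega
        simp [this]
  have hqk : q.coeff k = Q (Fin.last k) := by
    rw [hqc]
    simp only [hQf]
    rw [dif_pos (Nat.lt_succ_self k)]
    rfl
  have hdeg : q.degree = k := by
    refine Polynomial.degree_eq_of_le_of_coeff_ne_zero ?_ (by rw [hqk]; exact hQlast)
    rw [hq]
    refine le_trans (Polynomial.degree_sum_le _ _) ?_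
    refine Finset.sup_le fun j hj => ?_
    refine le_trans (Polynomial.degree_C_mul_X_pow_le _ _) ?_
    rw [Finset.mem_range] at hj
    exact_mod_cast Nat.cast_le.mpr (by omega : j ≤ k)
  -- the polynomial p
  set P : ℕ → ℤ := fun i => ∑ j ∈ Finset.Icc (i+1) k, Qf j * c (j - i) with hP
  set p : Polynomial ℤ := ∑ i ∈ Finset.range k, Polynomial.C (P i) * Polynomial.X ^ i with hp
  have hpc : ∀ i, p.coeff i = P i := by
    intro i
    rw [hp, Polynomial.finset_sum_coeff]
    simp only [Polynomial.coeff_C_mul_X_pow]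
    by_cases hi : i < k
    · rw [Finset.sum_eq_single i]
      · simp
      · intro b _ hbi; simp [Ne.symm hbi]
      · intro h; exact absurd (Finset.mem_range.mpr hi) h
    · rw [Finset.sum_eq_zero, hP]
      · have : Finset.Icc (i+1) k = ∅ := Finset.Icc_eq_empty (by omega)
        simp [this]
      · intro b hb
        rw [Finset.mem_range] at hb
        have : i ≠ b := by omega
        simp [this]
  -- height bound for the minors
  have hminor : ∀ j : Fin (k+1), (|Q j| : ℝ) ≤ (M^2 * k) ^ ((k:ℝ)/2) := by
    intro j
    set Ar : Matrix (Fin k) (Fin k) ℝ :=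
      (D.submatrix id j.succAbove).map (Int.cast : ℤ → ℝ) with hAr
    have hdet : (|Q j| : ℝ) = |Ar.det| := by
      rw [hQ, hAr, ← int_det_cast]
      push_cast
      rw [abs_mul, abs_pow, abs_neg, abs_one, one_pow, one_mul]
    have hent : ∀ i i', |Ar i i'| ≤ M := by
      intro i i'
      have h1 : (1:ℕ) ≤ i.1 + 1 + (j.succAbove i').1 := by omega
      have h2 : i.1 + 1 + (j.succAbove i').1 ≤ 2*k+1 := by
        have hi := i.isLt
        have hj' := (j.succAbove i').isLt
        omega
      have := hM _ h1 h2
      simpa [hAr, hD, Matrix.map_apply, Matrix.submatrix_apply] using this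
    have hsq := hadamard_sq Ar
    have hrow : ∀ i, ∑ j', Ar i j' ^ 2 ≤ M^2 * k := by
      intro i
      calc ∑ j', Ar i j' ^ 2 ≤ ∑ _j' : Fin k, M^2 := by
            refine Finset.sum_le_sum fun j' _ => ?_
            have h := hent i j'
            calc Ar i j' ^ 2 = |Ar i j'| ^ 2 := (sq_abs _).symm
              _ ≤ M ^ 2 := by
                  exact pow_le_pow_left₀ (abs_nonneg _) h 2
        _ = M^2 * k := by
            rw [Finset.sum_const, Finset.card_univ, Fintype.card_fin, nsmul_eq_mul]
            ring
    have h2 : Ar.det ^ 2 ≤ (M^2*k)^k := by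
      refine le_trans hsq ?_
      calc ∏ i, ∑ j', Ar i j' ^ 2 ≤ ∏ _i : Fin k, (M^2*k) := by
            refine Finset.prod_le_prod (fun i _ => Finset.sum_nonneg fun j' _ => sq_nonneg _)
              (fun i _ => hrow i)
        _ = (M^2*k)^k := by simp [Finset.card_univ]
    have h3 : |Ar.det| ≤ Real.sqrt ((M^2*k)^k) := by
      rw [← Real.sqrt_sq_eq_abs]
      exact Real.sqrt_le_sqrt h2
    have h4 : Real.sqrt ((M^2*k)^k) = (M^2*k) ^ ((k:ℝ)/2) := by
      rw [Real.sqrt_eq_rpow, ← Real.rpow_natCast (M^2*(k:ℝ)) k, ← Real.rpow_mul (by positivity),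
        mul_one_div]
    rw [hdet]
    rw [h4] at h3
    exact h3
  have hQb : ∀ j : ℕ, (|q.coeff j| : ℝ) ≤ (M^2 * k) ^ ((k:ℝ)/2) := by
    intro j
    rw [hqc]
    simp only [hQf]
    by_cases hj : j < k + 1
    · rw [dif_pos hj]; exact hminor _
    · rw [dif_neg hj]
      simpa using Real.rpow_nonneg (by positivity) _
  -- p bound
  have hPb : ∀ i : ℕ, (|p.coeff i| : ℝ) ≤ M^(k+1) * (k:ℝ) ^ (((k:ℝ)+2)/2) := by
    intro i
    rw [hpc]
    simp only [hP]
    push_cast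
    have h1 : (|∑ j ∈ Finset.Icc (i+1) k, Qf j * c (j - i)| : ℝ)
        ≤ ∑ j ∈ Finset.Icc (i+1) k, (M^2*(k:ℝ)) ^ ((k:ℝ)/2) * M := by
      refine le_trans (Finset.abs_sum_le_sum_abs _ _) (Finset.sum_le_sum fun j hj => ?_)
      rw [Finset.mem_Icc] at hj
      rw [abs_mul]
      refine mul_le_mul ?_ ?_ (abs_nonneg _) (Real.rpow_nonneg (by positivity) _)
      · have := hQb j
        rw [hqc] at this
        exact_mod_cast this
      · exact hM (j - i) (by omega) (by omega)
    refine le_trans h1 ?_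
    rw [Finset.sum_const, nsmul_eq_mul]
    have hcard : ((Finset.Icc (i+1) k).card : ℝ) ≤ (k:ℝ) := by
      rw [Nat.card_Icc]
      exact_mod_cast (by omega : k + 1 - (i + 1) ≤ k)
    have hterm : (0:ℝ) ≤ (M^2*(k:ℝ)) ^ ((k:ℝ)/2) * M :=
      mul_nonneg (Real.rpow_nonneg (by positivity) _) hM0
    refine le_trans (mul_le_mul_of_nonneg_right hcard hterm) (le_of_eq ?_)
    have e1 : (M^2*(k:ℝ)) ^ ((k:ℝ)/2) = M^k * (k:ℝ) ^ ((k:ℝ)/2) := by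
      rw [Real.mul_rpow (by positivity) (le_of_lt hk0)]
      congr 1
      rw [← Real.rpow_natCast M 2, ← Real.rpow_mul hM0, ← Real.rpow_natCast M k]
      congr 1
      push_cast
      ring
    have e2 : (k:ℝ) ^ (((k:ℝ)+2)/2) = (k:ℝ) ^ ((k:ℝ)/2) * (k:ℝ) := by
      rw [show ((k:ℝ)+2)/2 = (k:ℝ)/2 + 1 by ring, Real.rpow_add hk0, Real.rpow_one]
    rw [e1, e2, pow_succ]
    ring
  refine ⟨p, q, hdeg, ?_, ?_, hQb, hPb⟩
  · intro i h1 h2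
    calc ∑ j ∈ Finset.range (k+1), q.coeff j * c (i + j)
        = ∑ j : Fin (k+1), q.coeff j.1 * c (i + j.1) :=
          (Fin.sum_univ_eq_sum_range (fun j => q.coeff j * c (i + j)) (k+1)).symm
      _ = ∑ j : Fin (k+1), c (i + j.1) * Q j := by
          refine Finset.sum_congr rfl fun j _ => ?_
          have hj : Qf j.1 = Q j := by simp only [hQf]; rw [dif_pos j.isLt]
          rw [hqc, hj]; ring
      _ = 0 := orth i h1 h2
  · intro i
    rw [hpc, hP]
    refine Finset.sum_congr rfl fun j hj => ?_
    rw [hqc]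
end

section
/- Let g(z) = ∑_{n=1}^∞ c_n z^{-n} ∈ ℚ((z^{-1})). A reduced rational function p(z)/q(z) with deg q(z) = k is a convergent of g(z) if and only if the Hankel matrix H_k = (c_{i+j-1})_{1≤i,j≤k} is invertible, and in that case the coefficient vector of q(z) solves H_{k+1} a = c · e_{k+1} for some nonzero constant c. -/
open Polynomial Finset

noncomputable section AuxCF

/-- coefficients with `c 0` replaced by `0` -/
def hcc (c : ℕ → ℚ) : ℕ → ℚ := fun n => if n = 0 then 0 else c n

/-- the Laurent tail `g` as a power series in `X = z⁻¹` -/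
def hG (c : ℕ → ℚ) : PowerSeries ℚ := PowerSeries.mk (hcc c)

lemma hcc_zero (c : ℕ → ℚ) : hcc c 0 = 0 := rfl

lemma hcc_pos (c : ℕ → ℚ) {n : ℕ} (h : 1 ≤ n) : hcc c n = c n := by
  simp [hcc, Nat.one_le_iff_ne_zero.mp h]

lemma key_coeff (c : ℕ → ℚ) (A : Polynomial ℚ) (N t : ℕ) (hA : A.natDegree ≤ N) :
    (PowerSeries.coeff t) (((A.reflect N : Polynomial ℚ) : PowerSeries ℚ) * hG c) =
      ∑ j ∈ range (N + 1), A.coeff j * hcc c (t + j - N) := by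
  rw [PowerSeries.coeff_mul, Finset.Nat.sum_antidiagonal_eq_sum_range_succ_mk]
  simp only [Polynomial.coeff_coe, hG, PowerSeries.coeff_mk, Polynomial.coeff_reflect]
  have step1 : ∑ x ∈ range (t + 1), A.coeff ((revAt N) x) * hcc c (t - x) =
      ∑ x ∈ range (N + t + 1), A.coeff ((revAt N) x) * hcc c (t - x) := by
    apply Finset.sum_subset
    · exact Finset.range_subset_range.mpr (by omega)
    · intro x hx hx'
      have : t - x = 0 := by simp only [Finset.mem_range] at hx hx'; omega
      rw [this, hcc_zero, mul_zero]
  rw [step1]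
  have step2 : ∑ x ∈ range (N + t + 1), A.coeff ((revAt N) x) * hcc c (t - x) =
      ∑ x ∈ range (N + 1), A.coeff ((revAt N) x) * hcc c (t - x) := by
    symm
    apply Finset.sum_subset
    · exact Finset.range_subset_range.mpr (by omega)
    · intro x hx hx'
      have hxN : N < x := by simp only [Finset.mem_range] at hx hx'; omega
      rw [Polynomial.revAt_eq_self_of_lt hxN,
        Polynomial.coeff_eq_zero_of_natDegree_lt (by omega), zero_mul]
  rw [step2]
  have step3 : ∑ x ∈ range (N + 1), A.coeff ((revAt N) x) * hcc c (t - x) =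
      ∑ x ∈ range (N + 1), (fun j => A.coeff j * hcc c (t + j - N)) (N - x) := by
    apply Finset.sum_congr rfl
    intro x hx
    have hxN : x ≤ N := by simp only [Finset.mem_range] at hx; omega
    rw [Polynomial.revAt_le hxN]
    congr 2
    omega
  rw [step3]
  have := Finset.sum_range_reflect (fun j => A.coeff j * hcc c (t + j - N)) (N + 1)
  simpa using this

end AuxCF

noncomputable section Aux2

open Polynomial Finset

lemma natDegree_reflect_le {f : Polynomial ℚ} {N : ℕ} (h : f.natDegree ≤ N) :
    (f.reflect N).natDegree ≤ N := by
  rw [Polynomial.natDegree_le_iff_coeff_eq_zero]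
  intro m hm
  rw [Polynomial.coeff_reflect, Polynomial.revAt_eq_self_of_lt hm,
    Polynomial.coeff_eq_zero_of_natDegree_lt (by omega)]

lemma reflect_reflect' (f : Polynomial ℚ) (N : ℕ) : (f.reflect N).reflect N = f := by
  ext i
  simp [Polynomial.coeff_reflect]

/-- The two "convergent" conditions give `X^(2k+1) ∣ Q̂·g - P̂`. -/
lemma conds_dvd (c : ℕ → ℚ) (k : ℕ) (q p : Polynomial ℚ) (hq : q.natDegree ≤ k)
    (h1 : ∀ i : ℕ, 1 ≤ i → i ≤ k →
      ∑ j ∈ Finset.range (k + 1), q.coeff j * c (i + j) = 0)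
    (h2 : ∀ i : ℕ, p.coeff i = ∑ j ∈ Finset.Icc (i + 1) k, q.coeff j * c (j - i)) :
    (PowerSeries.X : PowerSeries ℚ) ^ (2 * k + 1) ∣
      ((q.reflect k : Polynomial ℚ) : PowerSeries ℚ) * hG c - ((p.reflect k : Polynomial ℚ) : PowerSeries ℚ) := by
  rw [PowerSeries.X_pow_dvd_iff]
  intro t ht
  rw [map_sub, key_coeff c q k t hq, Polynomial.coeff_coe, Polynomial.coeff_reflect]
  rcases le_or_gt t k with h | h
  · rw [Polynomial.revAt_le h, h2 (k - t)]
    rw [sub_eq_zero]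
    have hsub : Finset.Icc (k - t + 1) k ⊆ Finset.range (k + 1) := by
      intro x hx; simp only [Finset.mem_Icc] at hx; simp only [Finset.mem_range]; omega
    rw [← Finset.sum_subset hsub]
    · apply Finset.sum_congr rfl
      intro j hj
      simp only [Finset.mem_Icc] at hj
      have harg : t + j - k = j - (k - t) := by omega
      rw [hcc_pos c (show 1 ≤ t + j - k by omega), harg]
    · intro x hx hx'
      simp only [Finset.mem_range] at hx
      simp only [Finset.mem_Icc] at hx'
      have h0 : t + x - k = 0 := by omega
      rw [h0, hcc_zero, mul_zero]
  · have hrev : revAt k t = t := Polynomial.revAt_eq_self_of_lt h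
    rw [hrev]
    have h2t := h2 t
    rw [Finset.Icc_eq_empty (show ¬ t + 1 ≤ k by omega), Finset.sum_empty] at h2t
    rw [h2t, sub_zero]
    have h1t := h1 (t - k) (by omega) (by omega)
    rw [← h1t]
    apply Finset.sum_congr rfl
    intro j hj
    have harg : t + j - k = t - k + j := by omega
    rw [hcc_pos c (show 1 ≤ t + j - k by omega), harg]

/-- Conversely, divisibility yields the orthogonality relations. -/
lemma dvd_conds (c : ℕ → ℚ) (k' M : ℕ) (q' P : Polynomial ℚ)
    (hq' : q'.natDegree ≤ k') (hP : P.natDegree ≤ k')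
    (h : (PowerSeries.X : PowerSeries ℚ) ^ M ∣
      ((q'.reflect k' : Polynomial ℚ) : PowerSeries ℚ) * hG c - (P : PowerSeries ℚ)) :
    ∀ i : ℕ, 1 ≤ i → k' + i < M →
      ∑ j ∈ Finset.range (k' + 1), q'.coeff j * c (i + j) = 0 := by
  intro i hi hM
  have hc := (PowerSeries.X_pow_dvd_iff.mp h) (k' + i) hM
  rw [map_sub, key_coeff c q' k' _ hq', Polynomial.coeff_coe,
    Polynomial.coeff_eq_zero_of_natDegree_lt (show P.natDegree < k' + i by omega), sub_zero] at hc
  rw [← hc]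
  apply Finset.sum_congr rfl
  intro j hj
  have harg : k' + i + j - k' = i + j := by omega
  rw [hcc_pos c (show 1 ≤ k' + i + j - k' by omega), harg]

end Aux2

noncomputable section Aux3
open Polynomial Finset

lemma coprime_of_det (k : ℕ) (hk : 1 ≤ k) (c : ℕ → ℚ) (p q : Polynomial ℚ)
    (hqdeg : q.degree = k)
    (h1 : ∀ i : ℕ, 1 ≤ i → i ≤ k →
      ∑ j ∈ Finset.range (k + 1), q.coeff j * c (i + j) = 0)
    (h2 : ∀ i : ℕ, p.coeff i = ∑ j ∈ Finset.Icc (i + 1) k, q.coeff j * c (j - i))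
    (hdet : (Matrix.of fun i j : Fin k => c (i.1 + j.1 + 1)).det ≠ 0) :
    IsCoprime p q := by
  by_contra hncop
  have hq0 : q ≠ 0 := fun h => by simp [h] at hqdeg
  have hqnat : q.natDegree = k := natDegree_eq_of_degree_eq_some hqdeg
  set d := EuclideanDomain.gcd p q with hd
  have hdvd_p : d ∣ p := EuclideanDomain.gcd_dvd_left p q
  have hdvd_q : d ∣ q := EuclideanDomain.gcd_dvd_right p q
  have hdunit : ¬ IsUnit d := fun h => hncop (EuclideanDomain.gcd_isUnit_iff.mp h)
  have hdne : d ≠ 0 := fun h => hq0 (by simpa [h] using hdvd_q)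
  have hde : 1 ≤ d.natDegree := by
    by_contra h
    push_neg at h
    have h0 : d.natDegree = 0 := by omega
    have := Polynomial.eq_C_of_natDegree_eq_zero h0
    apply hdunit
    rw [this]
    exact Polynomial.isUnit_C.mpr (isUnit_iff_ne_zero.mpr (fun hc0 => hdne (by rw [this, hc0, map_zero])))
  obtain ⟨q', hq'⟩ := hdvd_q
  obtain ⟨p', hp'⟩ := hdvd_p
  have hq'0 : q' ≠ 0 := fun h => hq0 (by rw [hq', h, mul_zero])
  set e := d.natDegree with he
  set k' := q'.natDegree with hk'
  have hsum : e + k' = k := by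
    rw [← hqnat, hq', Polynomial.natDegree_mul hdne hq'0]
  have hek : 1 ≤ e := hde
  -- degree bound for p'
  have hpdeg : p.natDegree ≤ k := by
    rw [Polynomial.natDegree_le_iff_coeff_eq_zero]
    intro m hm
    rw [h2 m, Finset.Icc_eq_empty (show ¬ m + 1 ≤ k by omega), Finset.sum_empty]
  have hp'deg : p'.natDegree ≤ k' := by
    rcases eq_or_ne p' 0 with h | h
    · simp [h]
    · have hp0 : p ≠ 0 := fun h0 => by
        rw [h0] at hp'
        rcases mul_eq_zero.mp hp'.symm with h' | h'
        · exact hdne h'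
        · exact h h'
      have := Polynomial.natDegree_mul hdne h
      rw [← hp'] at this
      omega
  -- the divisibility
  have hdvd := conds_dvd c k q p (le_of_eq hqnat) h1 h2
  -- rewrite reflections
  have hrq : q.reflect k = d.reflect e * q'.reflect k' := by
    rw [hq', ← hsum]
    exact Polynomial.reflect_mul d q' le_rfl le_rfl
  have hrp : p.reflect k = d.reflect e * p'.reflect k' := by
    rw [hp', ← hsum]
    exact Polynomial.reflect_mul d p' le_rfl hp'deg
  rw [hrq, hrp] at hdvd
  push_cast at hdvd
  have hfac : ((d.reflect e : Polynomial ℚ) : PowerSeries ℚ) *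
      (((q'.reflect k' : Polynomial ℚ) : PowerSeries ℚ) * hG c -
        ((p'.reflect k' : Polynomial ℚ) : PowerSeries ℚ)) =
      ((d.reflect e : Polynomial ℚ) : PowerSeries ℚ) * ((q'.reflect k' : Polynomial ℚ) : PowerSeries ℚ) * hG c -
      ((d.reflect e : Polynomial ℚ) : PowerSeries ℚ) * ((p'.reflect k' : Polynomial ℚ) : PowerSeries ℚ) := by
    ring
  rw [← hfac] at hdvd
  -- the reflected d is a unit
  have hDunit : IsUnit ((d.reflect e : Polynomial ℚ) : PowerSeries ℚ) := by
    rw [PowerSeries.isUnit_iff_constantCoeff]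
    have : PowerSeries.constantCoeff ((d.reflect e : Polynomial ℚ) : PowerSeries ℚ) =
        d.leadingCoeff := by
      rw [← PowerSeries.coeff_zero_eq_constantCoeff_apply, Polynomial.coeff_coe,
        Polynomial.coeff_reflect, Polynomial.revAt_le (Nat.zero_le e), Nat.sub_zero]
      rfl
    rw [this]
    exact isUnit_iff_ne_zero.mpr (Polynomial.leadingCoeff_ne_zero.mpr hdne)
  obtain ⟨u, hu⟩ := hDunit
  have hdvd2 : (PowerSeries.X : PowerSeries ℚ) ^ (2 * k + 1) ∣
      ((q'.reflect k' : Polynomial ℚ) : PowerSeries ℚ) * hG c -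
        ((p'.reflect k' : Polynomial ℚ) : PowerSeries ℚ) := by
    obtain ⟨w, hw⟩ := hdvd
    refine ⟨(↑u⁻¹ : PowerSeries ℚ) * w, ?_⟩
    have : (↑u⁻¹ : PowerSeries ℚ) * (((d.reflect e : Polynomial ℚ) : PowerSeries ℚ) *
        (((q'.reflect k' : Polynomial ℚ) : PowerSeries ℚ) * hG c -
          ((p'.reflect k' : Polynomial ℚ) : PowerSeries ℚ))) =
        ((q'.reflect k' : Polynomial ℚ) : PowerSeries ℚ) * hG c -
          ((p'.reflect k' : Polynomial ℚ) : PowerSeries ℚ) := by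
      rw [← hu, ← mul_assoc]
      simp
    rw [← this, hw]
    ring
  -- extract the relations
  have hrel := dvd_conds c k' (2 * k + 1) q' (p'.reflect k') le_rfl
    (natDegree_reflect_le hp'deg) hdvd2
  -- build the kernel vector
  have hkk : k' < k := by omega
  set w : Fin k → ℚ := fun j => q'.coeff j.1 with hw
  have hwne : w ≠ 0 := by
    intro h
    have := congrFun h ⟨k', hkk⟩
    simp only [hw, Pi.zero_apply] at this
    exact (Polynomial.leadingCoeff_ne_zero.mpr hq'0) this
  have hmv : (Matrix.of fun i j : Fin k => c (i.1 + j.1 + 1)).mulVec w = 0 := by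
    funext i
    have hi := hrel (i.1 + 1) (by omega) (by omega)
    simp only [Matrix.mulVec, Matrix.of_apply, Pi.zero_apply, dotProduct]
    have hs : ∑ j : Fin k, c (i.1 + j.1 + 1) * w j
        = ∑ j ∈ Finset.range k, c (i.1 + j + 1) * q'.coeff j :=
      Fin.sum_univ_eq_sum_range (fun j => c (i.1 + j + 1) * q'.coeff j) k
    have hz : ∀ x ∈ Finset.range k, x ∉ Finset.range (k' + 1) →
        c (i.1 + x + 1) * q'.coeff x = 0 := by
      intro x hx hx'
      simp only [Finset.mem_range] at hx hx'
      rw [Polynomial.coeff_eq_zero_of_natDegree_lt (show q'.natDegree < x by omega), mul_zero]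
    rw [hs, ← Finset.sum_subset (Finset.range_subset_range.mpr (show k' + 1 ≤ k by omega)) hz, ← hi]
    apply Finset.sum_congr rfl
    intro j hj
    rw [mul_comm, show i.1 + j + 1 = i.1 + 1 + j by omega]
  exact hdet ((Matrix.exists_mulVec_eq_zero_iff.mp ⟨w, hwne, hmv⟩))

end Aux3

noncomputable section Aux4
open Polynomial Finset

lemma det_ne_of_exists (k : ℕ) (hk : 1 ≤ k) (c : ℕ → ℚ) (p q : Polynomial ℚ)
    (hqdeg : q.degree = k) (hcop : IsCoprime p q)
    (h1 : ∀ i : ℕ, 1 ≤ i → i ≤ k →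
      ∑ j ∈ Finset.range (k + 1), q.coeff j * c (i + j) = 0)
    (h2 : ∀ i : ℕ, p.coeff i = ∑ j ∈ Finset.Icc (i + 1) k, q.coeff j * c (j - i)) :
    (Matrix.of fun i j : Fin k => c (i.1 + j.1 + 1)).det ≠ 0 := by
  intro hdet0
  obtain ⟨w, hwne, hmv⟩ := Matrix.exists_mulVec_eq_zero_iff.mpr hdet0
  have hqnat : q.natDegree = k := natDegree_eq_of_degree_eq_some hqdeg
  have hq0 : q ≠ 0 := fun h => by simp [h] at hqdeg
  have hpdeg : p.natDegree ≤ k := by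
    rw [Polynomial.natDegree_le_iff_coeff_eq_zero]
    intro m hm
    rw [h2 m, Finset.Icc_eq_empty (show ¬ m + 1 ≤ k by omega), Finset.sum_empty]
  -- the kernel polynomial W
  set W : Polynomial ℚ := ∑ j : Fin k, Polynomial.C (w j) * Polynomial.X ^ j.1 with hWdef
  have hWcoeff : ∀ m : ℕ, W.coeff m = if h : m < k then w ⟨m, h⟩ else 0 := by
    intro m
    rw [hWdef, Polynomial.finset_sum_coeff]
    simp only [Polynomial.coeff_C_mul, Polynomial.coeff_X_pow]
    rcases lt_or_ge m k with h | h
    · rw [dif_pos h, Finset.sum_eq_single (⟨m, h⟩ : Fin k)]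
      · simp
      · intro b _ hb
        rw [if_neg (fun hc => hb (by exact Fin.ext hc.symm)), mul_zero]
      · intro hm; exact absurd (Finset.mem_univ _) hm
    · rw [dif_neg (not_lt.mpr h)]
      apply Finset.sum_eq_zero
      intro j _
      rw [if_neg (by omega), mul_zero]
  have hWdeg : W.natDegree ≤ k - 1 := by
    rw [Polynomial.natDegree_le_iff_coeff_eq_zero]
    intro m hm
    rw [hWcoeff m, dif_neg (by omega)]
  -- the truncation T
  set T : Polynomial ℚ := ∑ t ∈ Finset.range k,
    Polynomial.C ((PowerSeries.coeff t) (((W.reflect (k-1) : Polynomial ℚ) : PowerSeries ℚ) * hG c)) * Polynomial.X ^ t with hTdef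
  have hTcoeff : ∀ m : ℕ, T.coeff m = if m < k then
      (PowerSeries.coeff m) (((W.reflect (k-1) : Polynomial ℚ) : PowerSeries ℚ) * hG c) else 0 := by
    intro m
    rw [hTdef, Polynomial.finset_sum_coeff]
    simp only [Polynomial.coeff_C_mul, Polynomial.coeff_X_pow]
    rcases lt_or_ge m k with h | h
    · rw [if_pos h, Finset.sum_eq_single m]
      · simp
      · intro b _ hb
        rw [if_neg (fun hc => hb hc.symm), mul_zero]
      · intro hm; exact absurd (Finset.mem_range.mpr h) hm
    · rw [if_neg (not_lt.mpr h)]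
      apply Finset.sum_eq_zero
      intro j hj
      simp only [Finset.mem_range] at hj
      rw [if_neg (by omega), mul_zero]
  have hTdeg : T.natDegree ≤ k - 1 := by
    rw [Polynomial.natDegree_le_iff_coeff_eq_zero]
    intro m hm
    rw [hTcoeff m, if_neg (by omega)]
  -- first divisibility
  have hdvd1 : (PowerSeries.X : PowerSeries ℚ) ^ (2 * k) ∣
      ((W.reflect (k-1) : Polynomial ℚ) : PowerSeries ℚ) * hG c - (T : PowerSeries ℚ) := by
    rw [PowerSeries.X_pow_dvd_iff]
    intro t ht
    rw [map_sub, Polynomial.coeff_coe, hTcoeff t]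
    rcases lt_or_ge t k with h | h
    · rw [if_pos h, sub_self]
    · rw [if_neg (not_lt.mpr h), sub_zero, key_coeff c W (k-1) t hWdeg]
      have hrow := congrFun hmv ⟨t - k, by omega⟩
      simp only [Matrix.mulVec, dotProduct, Matrix.of_apply, Pi.zero_apply] at hrow
      rw [show k - 1 + 1 = k by omega]
      rw [← Fin.sum_univ_eq_sum_range (fun j => W.coeff j * hcc c (t + j - (k - 1))) k]
      rw [← hrow]
      apply Finset.sum_congr rfl
      intro j _
      rw [hWcoeff j.1, dif_pos j.isLt, Fin.eta, mul_comm,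
        hcc_pos c (show 1 ≤ t + j.1 - (k - 1) by omega),
        show t + j.1 - (k - 1) = t - k + j.1 + 1 by omega]
  have hdvd2 := conds_dvd c k q p (le_of_eq hqnat) h1 h2
  -- combine
  have hkey : (((q.reflect k) * T - (W.reflect (k-1)) * (p.reflect k) : Polynomial ℚ) : PowerSeries ℚ)
      = ((q.reflect k : Polynomial ℚ) : PowerSeries ℚ) *
          ((T : PowerSeries ℚ) - ((W.reflect (k-1) : Polynomial ℚ) : PowerSeries ℚ) * hG c)
        + ((W.reflect (k-1) : Polynomial ℚ) : PowerSeries ℚ) *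
          (((q.reflect k : Polynomial ℚ) : PowerSeries ℚ) * hG c - ((p.reflect k : Polynomial ℚ) : PowerSeries ℚ)) := by
    push_cast
    ring
  have hdvd3 : (PowerSeries.X : PowerSeries ℚ) ^ (2 * k) ∣
      (((q.reflect k) * T - (W.reflect (k-1)) * (p.reflect k) : Polynomial ℚ) : PowerSeries ℚ) := by
    rw [hkey]
    apply dvd_add
    · apply Dvd.dvd.mul_left
      have hneg : ((T : PowerSeries ℚ) - ((W.reflect (k-1) : Polynomial ℚ) : PowerSeries ℚ) * hG c)
          = -(((W.reflect (k-1) : Polynomial ℚ) : PowerSeries ℚ) * hG c - (T : PowerSeries ℚ)) := by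
        ring
      rw [hneg]
      exact dvd_neg.mpr hdvd1
    · exact Dvd.dvd.mul_left ((pow_dvd_pow _ (by omega)).trans hdvd2) _
  have hpoly : (q.reflect k) * T = (W.reflect (k-1)) * (p.reflect k) := by
    rw [← sub_eq_zero]
    ext m
    rcases lt_or_ge m (2 * k) with h | h
    · have := PowerSeries.X_pow_dvd_iff.mp hdvd3 m h
      rw [Polynomial.coeff_coe] at this
      simpa using this
    · rw [Polynomial.coeff_zero]
      apply Polynomial.coeff_eq_zero_of_natDegree_lt
      calc ((q.reflect k) * T - (W.reflect (k-1)) * (p.reflect k)).natDegree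
          ≤ max ((q.reflect k) * T).natDegree ((W.reflect (k-1)) * (p.reflect k)).natDegree :=
            Polynomial.natDegree_sub_le _ _
        _ ≤ max (k + (k-1)) ((k-1) + k) := by
            apply max_le_max
            · exact (Polynomial.natDegree_mul_le).trans
                (add_le_add (natDegree_reflect_le (le_of_eq hqnat)) hTdeg)
            · exact (Polynomial.natDegree_mul_le).trans
                (add_le_add (natDegree_reflect_le hWdeg) (natDegree_reflect_le hpdeg))
        _ < m := by omega
  -- reflect back
  have hrefl1 : ((q.reflect k) * T).reflect (k + (k-1)) = q * (T.reflect (k-1)) := by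
    rw [Polynomial.reflect_mul _ _ (natDegree_reflect_le (le_of_eq hqnat)) hTdeg,
      reflect_reflect']
  have hrefl2 : ((W.reflect (k-1)) * (p.reflect k)).reflect (k + (k-1)) = W * p := by
    rw [show k + (k-1) = (k-1) + k by omega,
      Polynomial.reflect_mul _ _ (natDegree_reflect_le hWdeg) (natDegree_reflect_le hpdeg),
      reflect_reflect', reflect_reflect']
  have heq : q * (T.reflect (k-1)) = W * p := by
    rw [← hrefl1, ← hrefl2, hpoly]
  have hqW : q ∣ W := by
    apply (hcop.symm).dvd_of_dvd_mul_left
    exact ⟨T.reflect (k-1), by rw [mul_comm p W, ← heq]⟩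
  have hWne : W ≠ 0 := by
    obtain ⟨j, hj⟩ := Function.ne_iff.mp hwne
    intro h
    apply hj
    have := hWcoeff j.1
    rw [h, Polynomial.coeff_zero, dif_pos j.isLt, Fin.eta] at this
    exact this.symm
  have := Polynomial.natDegree_le_of_dvd hqW hWne
  omega

end Aux4

noncomputable section Aux5
open Polynomial Finset

lemma exists_of_det (k : ℕ) (hk : 1 ≤ k) (c : ℕ → ℚ)
    (hdet : (Matrix.of fun i j : Fin k => c (i.1 + j.1 + 1)).det ≠ 0) :
    ∃ p q : Polynomial ℚ, q.degree = k ∧ IsCoprime p q ∧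
      (∀ i : ℕ, 1 ≤ i → i ≤ k →
        ∑ j ∈ Finset.range (k + 1), q.coeff j * c (i + j) = 0) ∧
      (∀ i : ℕ, p.coeff i = ∑ j ∈ Finset.Icc (i + 1) k, q.coeff j * c (j - i)) := by
  set M := (Matrix.of fun i j : Fin k => c (i.1 + j.1 + 1)) with hM
  set v : Fin k → ℚ := M⁻¹.mulVec (fun i => -c (k + i.1 + 1)) with hv
  have hMv : M.mulVec v = fun i => -c (k + i.1 + 1) := by
    rw [hv, Matrix.mulVec_mulVec, Matrix.mul_nonsing_inv _ (isUnit_iff_ne_zero.mpr hdet),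
      Matrix.one_mulVec]
  set q : Polynomial ℚ := Polynomial.X ^ k + ∑ j : Fin k, Polynomial.C (v j) * Polynomial.X ^ j.1
    with hqdef
  have hqcoeff : ∀ m : ℕ, q.coeff m =
      if m = k then 1 else (if h : m < k then v ⟨m, h⟩ else 0) := by
    intro m
    rw [hqdef, Polynomial.coeff_add, Polynomial.finset_sum_coeff]
    simp only [Polynomial.coeff_C_mul, Polynomial.coeff_X_pow]
    rcases eq_or_ne m k with h | h
    · rw [if_pos h, if_pos h]
      rw [Finset.sum_eq_zero, add_zero]
      intro j _
      rw [if_neg (by omega : ¬ m = j.1), mul_zero]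
    · rw [if_neg h, if_neg h, zero_add]
      rcases lt_or_ge m k with h' | h'
      · rw [dif_pos h', Finset.sum_eq_single (⟨m, h'⟩ : Fin k)]
        · simp
        · intro b _ hb
          rw [if_neg (fun hc => hb (Fin.ext hc.symm)), mul_zero]
        · intro hm; exact absurd (Finset.mem_univ _) hm
      · rw [dif_neg (not_lt.mpr h')]
        apply Finset.sum_eq_zero
        intro j _
        rw [if_neg (by omega), mul_zero]
  have hqdeg : q.degree = k := by
    apply Polynomial.degree_eq_of_le_of_coeff_ne_zero
    · rw [Polynomial.degree_le_iff_coeff_zero]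
      intro m hm
      have hmk : k < m := by exact_mod_cast hm
      rw [hqcoeff m, if_neg (by omega), dif_neg (by omega)]
    · rw [hqcoeff k, if_pos rfl]
      exact one_ne_zero
  have h1 : ∀ i : ℕ, 1 ≤ i → i ≤ k →
      ∑ j ∈ Finset.range (k + 1), q.coeff j * c (i + j) = 0 := by
    intro i hi hik
    rw [Finset.sum_range_succ, hqcoeff k, if_pos rfl, one_mul]
    have hrow := congrFun hMv ⟨i - 1, by omega⟩
    simp only [Matrix.mulVec, dotProduct, hM, Matrix.of_apply] at hrow
    have hs : ∑ j ∈ Finset.range k, q.coeff j * c (i + j)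
        = ∑ j : Fin k, c (i - 1 + j.1 + 1) * v j := by
      rw [← Fin.sum_univ_eq_sum_range (fun j => q.coeff j * c (i + j)) k]
      apply Finset.sum_congr rfl
      intro j _
      rw [hqcoeff j.1, if_neg (by omega), dif_pos j.isLt, Fin.eta, mul_comm,
        show i - 1 + j.1 + 1 = i + j.1 by omega]
    rw [hs, hrow, show k + (i - 1) + 1 = i + k by omega]
    ring
  set p : Polynomial ℚ := ∑ i ∈ Finset.range k,
    Polynomial.C (∑ j ∈ Finset.Icc (i + 1) k, q.coeff j * c (j - i)) * Polynomial.X ^ i with hpdef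
  have h2 : ∀ i : ℕ, p.coeff i = ∑ j ∈ Finset.Icc (i + 1) k, q.coeff j * c (j - i) := by
    intro m
    rw [hpdef, Polynomial.finset_sum_coeff]
    simp only [Polynomial.coeff_C_mul, Polynomial.coeff_X_pow]
    rcases lt_or_ge m k with h | h
    · rw [Finset.sum_eq_single m]
      · simp
      · intro b _ hb
        rw [if_neg (fun hc => hb hc.symm), mul_zero]
      · intro hm; exact absurd (Finset.mem_range.mpr h) hm
    · rw [Finset.Icc_eq_empty (show ¬ m + 1 ≤ k by omega), Finset.sum_empty]
      apply Finset.sum_eq_zero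
      intro j hj
      simp only [Finset.mem_range] at hj
      rw [if_neg (by omega), mul_zero]
  exact ⟨p, q, hqdeg, coprime_of_det k hk c p q hqdeg h1 h2 hdet, h1, h2⟩

end Aux5

/-- Let `g(z) = ∑_{n≥1} c_n z^{-n} ∈ ℚ((z^{-1}))`.  A reduced rational function `p/q` with
`deg q = k` is a convergent of `g` (by Legendre's theorem this is expressed by the vanishing
of the coefficients of `z^{-1},…,z^{-k}` in `q·g - p`, with `p` the polynomial part of `q·g`)
if and only if the Hankel matrix `H_k = (c_{i+j-1})_{1≤i,j≤k}` is invertible; and in that case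
(given that `H_{k+1}` is also invertible, as holds in the setting of the paper) the
coefficient vector `a` of `q` solves `H_{k+1} a = c₀ · e_{k+1}` for some nonzero constant
`c₀`. -/
theorem convergent_iff_hankel_invertible
    (k : ℕ) (hk : 1 ≤ k) (c : ℕ → ℚ) :
    ((∃ p q : Polynomial ℚ,
        q.degree = k ∧ IsCoprime p q ∧
        (∀ i : ℕ, 1 ≤ i → i ≤ k →
          ∑ j ∈ Finset.range (k + 1), q.coeff j * c (i + j) = 0) ∧
        (∀ i : ℕ, p.coeff i = ∑ j ∈ Finset.Icc (i + 1) k, q.coeff j * c (j - i))) ↔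
      (Matrix.of fun i j : Fin k => c (i.1 + j.1 + 1)).det ≠ 0) ∧
    (∀ p q : Polynomial ℚ,
      q.degree = k → IsCoprime p q →
      (∀ i : ℕ, 1 ≤ i → i ≤ k →
        ∑ j ∈ Finset.range (k + 1), q.coeff j * c (i + j) = 0) →
      (∀ i : ℕ, p.coeff i = ∑ j ∈ Finset.Icc (i + 1) k, q.coeff j * c (j - i)) →
      (Matrix.of fun i j : Fin (k + 1) => c (i.1 + j.1 + 1)).det ≠ 0 →
      ∃ c₀ : ℚ, c₀ ≠ 0 ∧
        ∀ i : Fin (k + 1),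
          ∑ j : Fin (k + 1), c (i.1 + j.1 + 1) * q.coeff j.1 =
            if i = Fin.last k then c₀ else 0) := by
  constructor
  · constructor
    · rintro ⟨p, q, hqdeg, hcop, h1, h2⟩
      exact det_ne_of_exists k hk c p q hqdeg hcop h1 h2
    · exact exists_of_det k hk c
  · intro p q hqdeg hcop h1 h2 hdet1
    have hqnat : q.natDegree = k := Polynomial.natDegree_eq_of_degree_eq_some hqdeg
    have hq0 : q ≠ 0 := fun h => by simp [h] at hqdeg
    set c₀ : ℚ := ∑ j : Fin (k + 1), c (k + j.1 + 1) * q.coeff j.1 with hc0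
    have hrows : ∀ i : Fin (k + 1), i ≠ Fin.last k →
        ∑ j : Fin (k + 1), c (i.1 + j.1 + 1) * q.coeff j.1 = 0 := by
      intro i hi
      have hik : i.1 < k := Fin.val_lt_last hi
      have hrow := h1 (i.1 + 1) (by omega) (by omega)
      rw [← hrow]
      rw [Fin.sum_univ_eq_sum_range (fun j => c (i.1 + j + 1) * q.coeff j) (k + 1)]
      apply Finset.sum_congr rfl
      intro j _
      rw [mul_comm, show i.1 + j + 1 = i.1 + 1 + j by omega]
    have hc0ne : c₀ ≠ 0 := by
      intro h0
      apply hdet1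
      apply Matrix.exists_mulVec_eq_zero_iff.mp
      refine ⟨fun j => q.coeff j.1, ?_, ?_⟩
      · intro h
        have := congrFun h (Fin.last k)
        simp only [Pi.zero_apply, Fin.val_last] at this
        rw [← hqnat] at this
        exact Polynomial.leadingCoeff_ne_zero.mpr hq0 this
      · funext i
        simp only [Matrix.mulVec, dotProduct, Matrix.of_apply, Pi.zero_apply]
        rcases eq_or_ne i (Fin.last k) with h | h
        · rw [h]
          simpa [Fin.val_last] using h0
        · exact hrows i h
    refine ⟨c₀, hc0ne, ?_⟩
    intro i
    rcases eq_or_ne i (Fin.last k) with h | h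
    · rw [if_pos h, h, hc0]
      simp [Fin.val_last]
    · rw [if_neg h]
      exact hrows i h
end

section
/- With the notation above, the leading tail coefficient α_{k,k+1} equals det H_{k+1}, the determinant of the (k+1)×(k+1) Hankel matrix of g(z); in particular, if all partial quotients of g are linear then α_{k,k+1} is a nonzero integer (when c_n ∈ ℤ). -/
/-- With `q_k(z) = ∑_{j=0}^k a_j z^j` chosen via Cramer's rule (so that
`a_j = Δ_{k+1,j}` is the determinant of the Hankel matrix `H_{k+1} = (c_{i+j+1})` with the
`j`-th column replaced by `e_{k+1}`), the leading tail coefficient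
`α_{k,k+1} = ∑_{j=0}^k a_j c_{k+1+j}` equals `det H_{k+1}`; in particular, if all partial
quotients of `g` are linear (so `det H_{k+1} ≠ 0`), then `α_{k,k+1}` is a nonzero
integer. -/
theorem leading_tail_coefficient_eq_hankel_det
    (k : ℕ) (c : ℕ → ℤ)
    (H : Matrix (Fin (k + 1)) (Fin (k + 1)) ℤ)
    (hHdef : H = Matrix.of fun i j : Fin (k + 1) => c (i.1 + j.1 + 1))
    (a : Fin (k + 1) → ℤ)
    (ha : ∀ j : Fin (k + 1),
      a j = (H.updateCol j (Pi.single (Fin.last k) 1)).det) :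
    (∑ j : Fin (k + 1), a j * c (k + 1 + j.1)) = H.det ∧
    (H.det ≠ 0 → (∑ j : Fin (k + 1), a j * c (k + 1 + j.1)) ≠ 0) := by
  have key : (∑ j : Fin (k + 1), a j * c (k + 1 + j.1)) = H.det := by
    have h := congrFun (Matrix.mulVec_cramer H (Pi.single (Fin.last k) 1)) (Fin.last k)
    simp only [Matrix.mulVec, dotProduct, Pi.smul_apply, Pi.single_eq_same,
      smul_eq_mul, mul_one, Matrix.cramer_apply] at h
    rw [← h]
    apply Finset.sum_congr rfl
    intro j _
    rw [ha j, mul_comm]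
    congr 2
    rw [hHdef]
    simp only [Matrix.of_apply, Fin.val_last]
    congr 1
    omega
  exact ⟨key, fun h => key ▸ h⟩
end

section
/- Let g(z) = g(z^d)/P*(z) as above, and let p_k(z)/q_k(z) be the k-th convergent of g(z) with deg q_k = k. Define q_{k,m}(z) := q_k(z^{d^m}) and p_{k,m}(z) := ∏_{t=0}^{m-1} P*(z^{d^t}) · p_k(z^{d^m}). Then q_{k,m}(z) g(z) − p_{k,m}(z) = ∏_{t=0}^{m-1} P*(z^{d^t}) · ∑_{i=k+1}^∞ α_{k,i} z^{-d^m · i}, where q_k(z)g(z) − p_k(z) = ∑_{i=k+1}^∞ α_{k,i} z^{-i}. In particular, p_{k,m}(z)/q_{k,m}(z) is again a convergent of g(z). -/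
open Filter

private lemma aux_abs_log_le {x : ℝ} (hx : 1/2 ≤ x) : |Real.log x| ≤ 2 * |x - 1| := by
  have hx0 : 0 < x := by linarith
  have hxi0 : 0 < x⁻¹ := inv_pos.2 hx0
  have h1 := Real.log_le_sub_one_of_pos hx0
  have h2 := Real.log_le_sub_one_of_pos hxi0
  rw [Real.log_inv] at h2
  have hxi : x * x⁻¹ = 1 := mul_inv_cancel₀ hx0.ne'
  rw [abs_le]
  rcases abs_cases (x - 1) with ⟨h, h'⟩ | ⟨h, h'⟩ <;> constructor <;> nlinarith

private lemma aux_geom {d : ℕ} (hd : 2 ≤ d) :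
    ∀ m : ℕ, ∑ t ∈ Finset.range m, d ^ t * (d - 1) = d ^ m - 1
  | 0 => by simp
  | (m+1) => by
    rw [Finset.sum_range_succ, aux_geom hd m]
    have h1 : 1 ≤ d ^ m := Nat.one_le_pow _ _ (by omega)
    have h2 : d ^ m * (d - 1) = d ^ m * d - d ^ m := by
      rw [Nat.mul_sub, Nat.mul_one]
    have h3 : d ^ (m+1) = d ^ m * d := pow_succ d m
    have h4 : d ^ m ≤ d ^ m * d := Nat.le_mul_of_pos_right _ (by omega)
    omega

private lemma aux_mult {d : ℕ} (hd : 2 ≤ d) (u : ℕ → ℤ) (hu0 : u 0 = 1) {w : ℝ}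
    (hw0 : 0 < w) (hw1 : w < 1) (s : ℕ) :
    Multipliable (fun t : ℕ => ∑ i ∈ Finset.range d, (u i : ℝ) * (w ^ d ^ (t + s)) ^ i) := by
  have hd1 : 1 < d := hd
  set F : ℕ → ℝ := fun t => ∑ i ∈ Finset.range d, (u i : ℝ) * (w ^ d ^ t) ^ i with hF
  suffices h : Multipliable (fun t : ℕ => F (t + s)) by
    simpa only [hF] using h
  set V : ℝ := ∑ i ∈ Finset.range d, |(u i : ℝ)| with hV
  have hV0 : 0 ≤ V := Finset.sum_nonneg fun _ _ => abs_nonneg _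
  have hdiff : ∀ t : ℕ, |F t - 1| ≤ V * w ^ d ^ t := by
    intro t
    obtain ⟨e, rfl⟩ : ∃ e, d = e + 2 := ⟨d - 2, by omega⟩
    have hwt0 : 0 < w ^ (e+2) ^ t := pow_pos hw0 _
    have hwt1 : w ^ (e+2) ^ t ≤ 1 := pow_le_one₀ hw0.le hw1.le
    have hsplit : F t - 1
        = ∑ i ∈ Finset.range (e+1), (u (i+1) : ℝ) * (w ^ (e+2) ^ t) ^ (i+1) := by
      simp only [hF]
      rw [Finset.sum_range_succ']
      simp [hu0]
    rw [hsplit]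
    have hsum_le : ∑ i ∈ Finset.range (e+1), |(u (i+1):ℝ)| ≤ V := by
      have hVrw : V = ∑ i ∈ Finset.range (e+1), |(u (i+1):ℝ)| + |(u 0:ℝ)| := by
        rw [hV, Finset.sum_range_succ']
      rw [hVrw]
      linarith [abs_nonneg ((u 0 : ℝ))]
    calc |∑ i ∈ Finset.range (e+1), (u (i+1) : ℝ) * (w ^ (e+2) ^ t) ^ (i+1)|
        ≤ ∑ i ∈ Finset.range (e+1), |(u (i+1):ℝ) * (w ^ (e+2) ^ t) ^ (i+1)| :=
          Finset.abs_sum_le_sum_abs _ _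
      _ ≤ ∑ i ∈ Finset.range (e+1), |(u (i+1):ℝ)| * w ^ (e+2) ^ t := by
          refine Finset.sum_le_sum fun i _ => ?_
          rw [abs_mul, abs_pow, abs_of_pos hwt0]
          refine mul_le_mul_of_nonneg_left ?_ (abs_nonneg _)
          calc (w ^ (e+2) ^ t) ^ (i+1) ≤ (w ^ (e+2) ^ t) ^ 1 :=
                pow_le_pow_of_le_one hwt0.le hwt1 (by omega)
            _ = w ^ (e+2) ^ t := pow_one _
      _ = (∑ i ∈ Finset.range (e+1), |(u (i+1):ℝ)|) * w ^ (e+2) ^ t := by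
          rw [Finset.sum_mul]
      _ ≤ V * w ^ (e+2) ^ t := mul_le_mul_of_nonneg_right hsum_le hwt0.le
  obtain ⟨N, hN⟩ : ∃ N : ℕ, w ^ N < 1/2/(V+1) := exists_pow_lt_of_lt_one (by positivity) hw1
  have hVN : ∀ t : ℕ, V * w ^ d ^ (t + (N + s)) ≤ 1/2 := by
    intro t
    have h1 : N ≤ d ^ (t + (N + s)) :=
      le_trans (by omega) (le_of_lt (Nat.lt_pow_self (n := t + (N + s)) hd1))
    have h2 : w ^ d ^ (t + (N + s)) ≤ w ^ N := pow_le_pow_of_le_one hw0.le hw1.le h1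
    have h3 : V * w ^ d ^ (t + (N + s)) ≤ V * w ^ N := mul_le_mul_of_nonneg_left h2 hV0
    have h4 : V * w ^ N ≤ (V+1) * w ^ N :=
      mul_le_mul_of_nonneg_right (by linarith) (pow_pos hw0 _).le
    have h5 : (V+1) * w ^ N < (V+1) * (1/2/(V+1)) :=
      mul_lt_mul_of_pos_left hN (by linarith)
    have hV1 : V + 1 ≠ 0 := by positivity
    have h6 : (V+1) * (1/2/(V+1)) = 1/2 := by field_simp
    linarith
  have hpos : ∀ t : ℕ, (1:ℝ)/2 ≤ F (t + (N + s)) := by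
    intro t
    have h := abs_le.1 (le_trans (hdiff (t + (N + s))) (hVN t))
    linarith [h.1]
  have hlog : Summable fun t : ℕ => Real.log (F (t + (N + s))) := by
    refine Summable.of_norm_bounded (g := fun t => 2 * (V * w ^ t))
      (((summable_geometric_of_lt_one hw0.le hw1).mul_left V).mul_left 2) ?_
    intro t
    have hb2 : |Real.log (F (t + (N + s)))| ≤ 2 * (V * w ^ t) := by
      refine (aux_abs_log_le (hpos t)).trans ?_
      have h1 : |F (t + (N + s)) - 1| ≤ V * w ^ d ^ (t + (N + s)) := hdiff _
      have h2 : w ^ d ^ (t + (N + s)) ≤ w ^ t :=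
        pow_le_pow_of_le_one hw0.le hw1.le
          (le_trans (by omega : t ≤ t + (N + s))
            (le_of_lt (Nat.lt_pow_self (n := t + (N + s)) hd1)))
      have h3 : V * w ^ d ^ (t + (N + s)) ≤ V * w ^ t := mul_le_mul_of_nonneg_left h2 hV0
      linarith
    simpa [Real.norm_eq_abs] using hb2
  have hmult : Multipliable fun t : ℕ => F (t + (N + s)) :=
    Real.multipliable_of_summable_log
      (fun t => lt_of_lt_of_le one_half_pos (hpos t)) hlog
  refine Multipliable.comp_nat_add (k := N) ?_
  have hcast : (fun t : ℕ => F (t + N + s)) = fun t : ℕ => F (t + (N + s)) := by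
    funext t
    congr 1
    omega
  show Multipliable fun t : ℕ => F (t + N + s)
  rw [hcast]
  exact hmult

private lemma aux_id (C V z : ℝ) (hz : 0 < z) (k e m : ℕ) :
    V ^ m * z ^ e * (2 * C * (z ^ ((e+1)*(k+1)))⁻¹) / (z ^ ((e+1)*k) / 2) * z ^ (2*(k*(e+1)))
      = 4 * C * V ^ m / z := by
  have hz' : z ≠ 0 := hz.ne'
  have h1 : z ^ ((e+1)*(k+1)) = (z ^ (e+1)) ^ (k+1) := pow_mul z (e+1) (k+1)
  have h2 : z ^ ((e+1)*k) = (z ^ (e+1)) ^ k := pow_mul z (e+1) k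
  have h3 : z ^ (2*(k*(e+1))) = ((z ^ (e+1)) ^ k) ^ 2 := by
    rw [← pow_mul, ← pow_mul]
    congr 1
    ring
  rw [h1, h2, h3]
  have hy0 : (0:ℝ) < z ^ (e+1) := pow_pos hz _
  have hyk : (0:ℝ) < (z ^ (e+1)) ^ k := pow_pos hy0 _
  rw [pow_succ (z ^ (e+1)) k]
  have hzz : z ^ (e+1) = z ^ e * z := pow_succ z e
  field_simp
  ring

set_option maxHeartbeats 2000000 in
open Filter in
/-- Convergents generated by the functional equation.  Let `d ≥ 2`,
`P(z) = 1 + u_1 z + ⋯ + u_{d-1} z^{d-1}`, `g(z) = z^{-1}∏_{t≥0} P(z^{-d^t})` (so that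
`g(z) = g(z^d)/P*(z)` with `P*(z) = z^{d-1}P(1/z)`), and let `p_k/q_k` be the `k`-th
convergent of `g`, with `deg q_k = k` and `q_k(z) g(z) - p_k(z) = ∑_{i>k} α_{k,i} z^{-i}`
(the `α`'s having at most geometric growth).  Define `q_{k,m}(z) = q_k(z^{d^m})` and
`p_{k,m}(z) = ∏_{t<m} P*(z^{d^t}) · p_k(z^{d^m})`.  Then
`q_{k,m}(z) g(z) - p_{k,m}(z) = ∏_{t<m} P*(z^{d^t}) · ∑_{i>k} α_{k,i} z^{-d^m i}`;
in particular `p_{k,m}/q_{k,m}` is again a convergent of `g` (Legendre: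
`|g(z) - p_{k,m}(z)/q_{k,m}(z)| = o(z^{-2·deg q_{k,m}})` as `z → ∞`). -/
theorem functional_equation_generates_convergents
    (d k m : ℕ) (hd : 2 ≤ d) (hk : 1 ≤ k) (hm : 1 ≤ m)
    (u : ℕ → ℤ) (hu0 : u 0 = 1) (hud : ∀ i, d ≤ i → u i = 0)
    (g : ℝ → ℝ)
    (hg : ∀ z : ℝ, g z = z⁻¹ * ∏' t : ℕ, ∑ i ∈ Finset.range d, (u i : ℝ) * (z⁻¹ ^ (d ^ t)) ^ i)
    (a b : ℕ → ℤ) (hak : a k ≠ 0)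
    (α : ℕ → ℝ) (C r : ℝ) (hC : 0 ≤ C) (hr : 1 ≤ r)
    (hαgrow : ∀ i : ℕ, |α i| ≤ C * r ^ i)
    (hser : ∀ x : ℝ, r < x →
      (∑ j ∈ Finset.range (k + 1), (a j : ℝ) * x ^ j) * g x -
        (∑ i ∈ Finset.range k, (b i : ℝ) * x ^ i) =
      ∑' i : ℕ, α i * (x⁻¹) ^ (k + 1 + i)) :
    (∀ z : ℝ, r < z →
      (∑ j ∈ Finset.range (k + 1), (a j : ℝ) * (z ^ d ^ m) ^ j) * g z -
        (∏ t ∈ Finset.range m, ∑ i ∈ Finset.range d, (u i : ℝ) * (z ^ d ^ t) ^ (d - 1 - i)) *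
          (∑ i ∈ Finset.range k, (b i : ℝ) * (z ^ d ^ m) ^ i) =
      (∏ t ∈ Finset.range m, ∑ i ∈ Finset.range d, (u i : ℝ) * (z ^ d ^ t) ^ (d - 1 - i)) *
        ∑' i : ℕ, α i * ((z ^ d ^ m)⁻¹) ^ (k + 1 + i)) ∧
    Filter.Tendsto
      (fun z : ℝ =>
        |g z - (∏ t ∈ Finset.range m, ∑ i ∈ Finset.range d,
            (u i : ℝ) * (z ^ d ^ t) ^ (d - 1 - i)) *
          (∑ i ∈ Finset.range k, (b i : ℝ) * (z ^ d ^ m) ^ i) /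
          (∑ j ∈ Finset.range (k + 1), (a j : ℝ) * (z ^ d ^ m) ^ j)| *
        z ^ (2 * (k * d ^ m)))
      Filter.atTop (nhds 0) := by
  have hd1 : 1 < d := hd
  have hdm0 : d ^ m ≠ 0 := pow_ne_zero m (by omega)
  have hdm1 : 1 ≤ d ^ m := Nat.one_le_pow m d (by omega)
  -- Part 1
  have key : ∀ z : ℝ, r < z →
      (∑ j ∈ Finset.range (k + 1), (a j : ℝ) * (z ^ d ^ m) ^ j) * g z -
        (∏ t ∈ Finset.range m, ∑ i ∈ Finset.range d, (u i : ℝ) * (z ^ d ^ t) ^ (d - 1 - i)) *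
          (∑ i ∈ Finset.range k, (b i : ℝ) * (z ^ d ^ m) ^ i) =
      (∏ t ∈ Finset.range m, ∑ i ∈ Finset.range d, (u i : ℝ) * (z ^ d ^ t) ^ (d - 1 - i)) *
        ∑' i : ℕ, α i * ((z ^ d ^ m)⁻¹) ^ (k + 1 + i) := by
    intro z hz
    have hz1 : 1 < z := lt_of_le_of_lt hr hz
    have hz0 : 0 < z := by linarith
    set F : ℕ → ℝ := fun t => ∑ i ∈ Finset.range d, (u i : ℝ) * ((z⁻¹) ^ d ^ t) ^ i with hF
    have hM : Multipliable fun t : ℕ => F (t + m) := by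
      simp only [hF]
      exact aux_mult hd u hu0 (inv_pos.2 hz0) (inv_lt_one_of_one_lt₀ hz1) m
    set x := z ^ d ^ m with hxdef
    have hzx : z ≤ x := le_self_pow₀ hz1.le hdm0
    have hxr : r < x := lt_of_lt_of_le hz hzx
    have hx0 : 0 < x := pow_pos hz0 _
    have hbase : ∀ t : ℕ, (x⁻¹ : ℝ) ^ d ^ t = (z⁻¹) ^ d ^ (t + m) := by
      intro t
      rw [hxdef, ← inv_pow, ← pow_mul]
      congr 1
      rw [pow_add]
      exact Nat.mul_comm _ _
    have hgx : g x = x⁻¹ * ∏' t : ℕ, F (t + m) := by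
      rw [hg x]
      congr 1
      refine tprod_congr fun t => ?_
      simp only [hF]
      rw [hbase t]
    have hgz : g z = z⁻¹ * ∏' t : ℕ, F t := by
      simp only [hF]
      exact hg z
    have hfac : ∀ t : ℕ, (∑ i ∈ Finset.range d, (u i : ℝ) * (z ^ d ^ t) ^ (d - 1 - i))
        = z ^ (d ^ t * (d - 1)) * F t := by
      intro t
      simp only [hF]
      rw [Finset.mul_sum]
      refine Finset.sum_congr rfl fun i hi => ?_
      have hid : i < d := Finset.mem_range.mp hi
      rw [← pow_mul, ← pow_mul, inv_pow]
      have hexp : d ^ t * (d - 1) = d ^ t * (d - 1 - i) + d ^ t * i := by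
        rw [← Nat.mul_add]
        congr 1
        omega
      rw [hexp, pow_add]
      have hne : z ^ (d ^ t * i) ≠ 0 := (pow_pos hz0 _).ne'
      field_simp
    have hQ : (∏ t ∈ Finset.range m, ∑ i ∈ Finset.range d, (u i : ℝ) * (z ^ d ^ t) ^ (d - 1 - i))
        = z ^ (d ^ m - 1) * ∏ t ∈ Finset.range m, F t := by
      rw [Finset.prod_congr rfl fun t _ => hfac t, Finset.prod_mul_distrib,
        Finset.prod_pow_eq_pow_sum, aux_geom hd m]
    have hfe : (∏ t ∈ Finset.range m, ∑ i ∈ Finset.range d,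
        (u i : ℝ) * (z ^ d ^ t) ^ (d - 1 - i)) * g x = g z := by
      have hshift := Multipliable.prod_mul_tprod_nat_mul' hM
      have hzx' : z ^ (d ^ m - 1) * x⁻¹ = z⁻¹ := by
        have h1 : x = z ^ (d ^ m - 1) * z := by
          rw [hxdef, ← pow_succ]
          congr 1
          omega
        rw [h1]
        have h2 : z ^ (d ^ m - 1) ≠ 0 := (pow_pos hz0 _).ne'
        field_simp
      rw [hQ, hgx, hgz]
      calc z ^ (d ^ m - 1) * (∏ t ∈ Finset.range m, F t) * (x⁻¹ * ∏' t : ℕ, F (t + m))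
          = (z ^ (d ^ m - 1) * x⁻¹) * ((∏ t ∈ Finset.range m, F t) * ∏' t : ℕ, F (t + m)) := by
            ring
        _ = z⁻¹ * ∏' t : ℕ, F t := by rw [hzx', hshift]
    rw [← hfe]
    linear_combination (∏ t ∈ Finset.range m, ∑ i ∈ Finset.range d,
      (u i : ℝ) * (z ^ d ^ t) ^ (d - 1 - i)) * hser x hxr
  refine ⟨key, ?_⟩
  -- Part 2
  have hr0 : 0 < r := lt_of_lt_of_le one_pos hr
  set V : ℝ := ∑ i ∈ Finset.range d, |(u i : ℝ)| with hV
  set A : ℝ := ∑ j ∈ Finset.range k, |(a j : ℝ)| with hA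
  have hV0 : 0 ≤ V := Finset.sum_nonneg fun _ _ => abs_nonneg _
  have hA0 : 0 ≤ A := Finset.sum_nonneg fun _ _ => abs_nonneg _
  have hVm0 : 0 ≤ V ^ m := pow_nonneg hV0 m
  set Z : ℝ := 2*r + 2*A + 2 with hZ
  have hZ4 : (4:ℝ) ≤ Z := by rw [hZ]; linarith
  apply squeeze_zero' (g := fun z : ℝ => 4 * C * V ^ m / z)
  · filter_upwards [eventually_ge_atTop Z] with z hzZ
    have hz0 : (0:ℝ) ≤ z := by linarith
    exact mul_nonneg (abs_nonneg _) (pow_nonneg hz0 _)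
  · filter_upwards [eventually_ge_atTop Z] with z hzZ
    have hz2 : (2:ℝ) ≤ z := by linarith
    have hz1 : 1 < z := by linarith
    have hz0 : 0 < z := by linarith
    have hzr : r < z := by rw [hZ] at hzZ; linarith
    have hz2r : 2*r ≤ z := by rw [hZ] at hzZ; linarith
    have hz2A : 2*A ≤ z := by rw [hZ] at hzZ; linarith
    have hkey := key z hzr
    set x := z ^ d ^ m with hxdef
    have hzx : z ≤ x := le_self_pow₀ hz1.le hdm0
    have hx0 : 0 < x := pow_pos hz0 _
    have hx1 : 1 < x := lt_of_lt_of_le hz1 hzx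
    have hx2r : 2*r ≤ x := by linarith
    have hx2A : 2*A ≤ x := by linarith
    set Q := ∏ t ∈ Finset.range m, ∑ i ∈ Finset.range d,
      (u i : ℝ) * (z ^ d ^ t) ^ (d - 1 - i) with hQdef
    set q := ∑ j ∈ Finset.range (k+1), (a j : ℝ) * x ^ j with hqdef
    set p := ∑ i ∈ Finset.range k, (b i : ℝ) * x ^ i with hpdef
    set T := ∑' i : ℕ, α i * (x⁻¹) ^ (k+1+i) with hTdef
    -- lower bound on |q|
    have hak1 : (1:ℝ) ≤ |(a k : ℝ)| := by exact_mod_cast Int.one_le_abs hak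
    have hsb : |∑ j ∈ Finset.range k, (a j:ℝ) * x ^ j| ≤ A * x ^ (k-1) := by
      refine (Finset.abs_sum_le_sum_abs _ _).trans ?_
      rw [hA, Finset.sum_mul]
      refine Finset.sum_le_sum fun j hj => ?_
      rw [abs_mul, abs_pow, abs_of_pos hx0]
      refine mul_le_mul_of_nonneg_left (pow_le_pow_right₀ hx1.le ?_) (abs_nonneg _)
      have := Finset.mem_range.mp hj
      omega
    have hxk1 : x ^ (k-1) * x = x ^ k := by
      rw [← pow_succ]
      congr 1
      omega
    have hqlow : x ^ k / 2 ≤ |q| := by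
      have h1 : |(a k:ℝ) * x ^ k| ≤ |q| + |∑ j ∈ Finset.range k, (a j:ℝ) * x ^ j| := by
        have heq : (a k:ℝ) * x ^ k = q - ∑ j ∈ Finset.range k, (a j:ℝ) * x ^ j := by
          rw [hqdef, Finset.sum_range_succ]
          ring
        rw [heq]
        exact abs_sub _ _
      have h2 : x ^ k ≤ |(a k:ℝ) * x ^ k| := by
        rw [abs_mul, abs_pow, abs_of_pos hx0]
        nlinarith [pow_pos hx0 k]
      have h3 : A * x ^ (k-1) ≤ x ^ k / 2 := by
        have h4 : 0 ≤ (x - 2*A) * x ^ (k-1) := mul_nonneg (by linarith) (pow_pos hx0 _).le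
        nlinarith [hxk1]
      linarith
    have hq0 : q ≠ 0 := by
      intro h
      rw [h, abs_zero] at hqlow
      nlinarith [pow_pos hx0 k]
    have hgval : g z - Q * p / q = Q * T / q := by
      field_simp
      linear_combination hkey
    -- bound on |Q|
    have hQb : |Q| ≤ V ^ m * z ^ (d ^ m - 1) := by
      rw [hQdef, Finset.abs_prod]
      calc ∏ t ∈ Finset.range m, |∑ i ∈ Finset.range d, (u i:ℝ) * (z ^ d ^ t) ^ (d-1-i)|
          ≤ ∏ t ∈ Finset.range m, (V * z ^ (d ^ t * (d-1))) := by
            refine Finset.prod_le_prod (fun _ _ => abs_nonneg _) fun t _ => ?_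
            refine (Finset.abs_sum_le_sum_abs _ _).trans ?_
            rw [hV, Finset.sum_mul]
            refine Finset.sum_le_sum fun i hi => ?_
            rw [abs_mul, abs_pow, abs_of_pos (pow_pos hz0 _), ← pow_mul]
            refine mul_le_mul_of_nonneg_left (pow_le_pow_right₀ hz1.le ?_) (abs_nonneg _)
            exact Nat.mul_le_mul le_rfl (by omega)
        _ = V ^ m * z ^ (d ^ m - 1) := by
            rw [Finset.prod_mul_distrib, Finset.prod_const, Finset.prod_pow_eq_pow_sum,
              aux_geom hd m, Finset.card_range]
    -- bound on |T|
    have hw0 : 0 < x⁻¹ := inv_pos.2 hx0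
    have hρ0 : 0 ≤ r * x⁻¹ := by positivity
    have hρhalf : r * x⁻¹ ≤ 1/2 := by
      have h5 : r ≤ x / 2 := by linarith
      have h6 : x / 2 * x⁻¹ = 1 / 2 := by field_simp
      calc r * x⁻¹ ≤ x/2 * x⁻¹ := mul_le_mul_of_nonneg_right h5 hw0.le
        _ = 1/2 := h6
    have hρ1 : r * x⁻¹ < 1 := by linarith
    have hbound : ∀ i : ℕ, |α i * (x⁻¹) ^ (k+1+i)| ≤ (C * (x⁻¹)^(k+1)) * (r * x⁻¹) ^ i := by
      intro i
      calc |α i * (x⁻¹) ^ (k+1+i)| = |α i| * (x⁻¹)^(k+1+i) := by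
            rw [abs_mul, abs_of_pos (pow_pos hw0 _)]
        _ ≤ (C * r^i) * (x⁻¹)^(k+1+i) :=
            mul_le_mul_of_nonneg_right (hαgrow i) (by positivity)
        _ = (C * (x⁻¹)^(k+1)) * (r * x⁻¹)^i := by
            rw [pow_add, mul_pow]
            ring
    have hmaj : Summable fun i : ℕ => (C * (x⁻¹)^(k+1)) * (r * x⁻¹)^i :=
      (summable_geometric_of_lt_one hρ0 hρ1).mul_left _
    have habs : Summable fun i : ℕ => |α i * (x⁻¹)^(k+1+i)| :=
      Summable.of_nonneg_of_le (fun _ => abs_nonneg _) hbound hmaj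
    have hTb : |T| ≤ 2 * C * (x⁻¹)^(k+1) := by
      rw [hTdef]
      have hstep : |∑' i : ℕ, α i * (x⁻¹)^(k+1+i)| ≤ ∑' i : ℕ, |α i * (x⁻¹)^(k+1+i)| := by
        have := norm_tsum_le_tsum_norm (f := fun i : ℕ => α i * (x⁻¹)^(k+1+i))
          (by simpa only [Real.norm_eq_abs] using habs)
        simpa only [Real.norm_eq_abs] using this
      refine hstep.trans ?_
      calc ∑' i : ℕ, |α i * (x⁻¹)^(k+1+i)|
          ≤ ∑' i : ℕ, (C * (x⁻¹)^(k+1)) * (r * x⁻¹)^i := Summable.tsum_le_tsum hbound habs hmaj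
        _ = (C * (x⁻¹)^(k+1)) * (1 - r*x⁻¹)⁻¹ := by
            rw [tsum_mul_left, tsum_geometric_of_lt_one hρ0 hρ1]
        _ ≤ (C * (x⁻¹)^(k+1)) * 2 := by
            refine mul_le_mul_of_nonneg_left ?_ (by positivity)
            have h9 : (1:ℝ)/2 ≤ 1 - r*x⁻¹ := by linarith
            calc (1 - r*x⁻¹)⁻¹ ≤ ((1:ℝ)/2)⁻¹ := inv_anti₀ (by norm_num) h9
              _ = 2 := by norm_num
        _ = 2 * C * (x⁻¹)^(k+1) := by ring
    -- final estimate
    obtain ⟨e, hem⟩ : ∃ e, d ^ m = e + 1 := ⟨d ^ m - 1, by omega⟩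
    have hem1 : d ^ m - 1 = e := by omega
    rw [hgval, abs_div, abs_mul]
    have hnum : |Q| * |T| ≤ (V^m * z^(d^m-1)) * (2*C*(x⁻¹)^(k+1)) :=
      mul_le_mul hQb hTb (abs_nonneg _) (by positivity)
    have hdiv : |Q| * |T| / |q| ≤ (V^m * z^(d^m-1)) * (2*C*(x⁻¹)^(k+1)) / (x^k/2) :=
      div_le_div₀ (by positivity) hnum (by positivity) hqlow
    have hfin : (V^m * z^(d^m-1)) * (2*C*(x⁻¹)^(k+1)) / (x^k/2) * z^(2*(k*d^m))
        = 4*C*V^m/z := by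
      rw [hxdef, hem1, hem, ← inv_pow, ← pow_mul, ← pow_mul, inv_pow]
      exact aux_id C V z hz0 k e m
    calc |Q| * |T| / |q| * z^(2*(k*d^m))
        ≤ (V^m * z^(d^m-1)) * (2*C*(x⁻¹)^(k+1)) / (x^k/2) * z^(2*(k*d^m)) :=
          mul_le_mul_of_nonneg_right hdiv (pow_nonneg hz0.le _)
      _ = 4*C*V^m/z := hfin
  · have := tendsto_inv_atTop_zero.const_mul (4*C*V^m)
    simpa [div_eq_mul_inv] using this
end
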